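/- Let K be a compact Hausdorff space. Suppose (μ_i)_{i∈I} is a family of regular finite signed Borel measures on K indexed by a set I carrying a filter l, and μ is a regular finite signed Borel measure on K, such that ∫_K g dμ_i → ∫_K g dμ along l for every continuous g : K → ℝ. Then for every open set U ⊆ K one has |μ|(U) ≤ liminf_{l} |μ_i|(U). (Equivalently: on the space of regular finite signed Borel measures on K with the weak* topology, the map μ ↦ |μ|(U) is lower semicontinuous for every open U ⊆ K.) -/

import Mathlib

open MeasureTheory Filter
open scoped ENNReal NNReal

/-- Integral of a real function against a signed measure, via the Jordan decomposition. -/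
noncomputable def sInteg {X : Type*} [MeasurableSpace X] (μ : SignedMeasure X) (g : X → ℝ) : ℝ :=
  ∫ x, g x ∂μ.toJordanDecomposition.posPart - ∫ x, g x ∂μ.toJordanDecomposition.negPart

lemma tv_apply {X : Type*} [MeasurableSpace X] (ν : SignedMeasure X) (s : Set X) :
    ν.totalVariation s
      = ν.toJordanDecomposition.posPart s + ν.toJordanDecomposition.negPart s := by
  simp [SignedMeasure.totalVariation]

lemma tv_ne_top {X : Type*} [MeasurableSpace X] (ν : SignedMeasure X) (s : Set X) :
    ν.totalVariation s ≠ ⊤ := by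
  rw [tv_apply]
  exact ENNReal.add_ne_top.2 ⟨measure_ne_top _ s, measure_ne_top _ s⟩

/-- If `|g| ≤ 1` and `g` vanishes off `U`, then `∫ g dν ≤ |ν|(U)`. -/
lemma sInteg_le_tv {X : Type*} [TopologicalSpace X] [CompactSpace X]
    [MeasurableSpace X] [OpensMeasurableSpace X]
    (ν : SignedMeasure X) (g : C(X, ℝ)) {U : Set X} (hUm : MeasurableSet U)
    (hg1 : ∀ x, |g x| ≤ 1) (hg0 : ∀ x ∉ U, g x = 0) :
    sInteg ν g ≤ (ν.totalVariation U).toReal := by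
  set p := ν.toJordanDecomposition.posPart with hp
  set n := ν.toJordanDecomposition.negPart with hn
  have hind : Integrable (U.indicator fun _ => (1 : ℝ)) p :=
    (integrable_const (1 : ℝ)).indicator hUm
  have hind' : Integrable (U.indicator fun _ => (1 : ℝ)) n :=
    (integrable_const (1 : ℝ)).indicator hUm
  have hgintp : Integrable (fun x => g x) p :=
    g.continuous.integrable_of_hasCompactSupport (HasCompactSupport.of_compactSpace _)
  have hgintn : Integrable (fun x => g x) n :=
    g.continuous.integrable_of_hasCompactSupport (HasCompactSupport.of_compactSpace _)
  have hle : ∀ x, g x ≤ U.indicator (fun _ => (1 : ℝ)) x := by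
    intro x
    by_cases hx : x ∈ U
    · simpa [hx] using (abs_le.1 (hg1 x)).2
    · simp [hx, hg0 x hx]
  have hle' : ∀ x, -g x ≤ U.indicator (fun _ => (1 : ℝ)) x := by
    intro x
    by_cases hx : x ∈ U
    · simpa [hx] using neg_le_of_neg_le (abs_le.1 (hg1 x)).1
    · simp [hx, hg0 x hx]
  have h1 : ∫ x, g x ∂p ≤ (p U).toReal := by
    calc ∫ x, g x ∂p ≤ ∫ x, U.indicator (fun _ => (1 : ℝ)) x ∂p :=
          integral_mono hgintp hind hle
      _ = (p U).toReal := by rw [integral_indicator_const (1 : ℝ) hUm]; simp; rfl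
  have h2 : -∫ x, g x ∂n ≤ (n U).toReal := by
    rw [← integral_neg]
    calc ∫ x, -g x ∂n ≤ ∫ x, U.indicator (fun _ => (1 : ℝ)) x ∂n :=
          integral_mono hgintn.neg hind' hle'
      _ = (n U).toReal := by rw [integral_indicator_const (1 : ℝ) hUm]; simp; rfl
  have htv : (ν.totalVariation U).toReal = (p U).toReal + (n U).toReal := by
    rw [tv_apply, ENNReal.toReal_add (measure_ne_top _ _) (measure_ne_top _ _)]
  rw [sInteg, htv]
  linarith

/-- If ∫ g dμᵢ → ∫ g dμ along `l` for every continuous `g`, then for every open `U`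
we have `|μ|(U) ≤ liminf |μᵢ|(U)`. -/
theorem stmt1 {K : Type*} [TopologicalSpace K] [CompactSpace K] [T2Space K]
    [MeasurableSpace K] [BorelSpace K]
    {I : Type*} (l : Filter I) [l.NeBot]
    (μs : I → SignedMeasure K) (μ : SignedMeasure K)
    (hregs : ∀ i, (μs i).totalVariation.Regular) (hreg : μ.totalVariation.Regular)
    (hconv : ∀ g : C(K, ℝ), Tendsto (fun i => sInteg (μs i) g) l (nhds (sInteg μ g)))
    (U : Set K) (hU : IsOpen U) :
    μ.totalVariation U ≤ liminf (fun i => (μs i).totalVariation U) l := by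
  haveI := hreg
  refine ENNReal.le_of_forall_pos_le_add fun ε hε _ => ?_
  set p := μ.toJordanDecomposition.posPart with hp
  set n := μ.toJordanDecomposition.negPart with hn
  obtain ⟨S, hSm, hpS, hnS⟩ := μ.toJordanDecomposition.mutuallySingular
  -- p S = 0, n Sᶜ = 0
  set δ : ℝ≥0∞ := ENNReal.ofReal ((ε : ℝ) / 4) with hδ
  have hδ0 : δ ≠ 0 := by
    simp only [hδ, ne_eq, ENNReal.ofReal_eq_zero, not_le]
    positivity
  have hδtop : δ ≠ ⊤ := ENNReal.ofReal_ne_top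
  have hδr : δ.toReal = (ε : ℝ) / 4 := ENNReal.toReal_ofReal (by positivity)
  -- choose A
  have hUSc : MeasurableSet (U ∩ Sᶜ) := hU.measurableSet.inter hSm.compl
  have hUS : MeasurableSet (U ∩ S) := hU.measurableSet.inter hSm
  obtain ⟨A, hAsub, hAc, hAlt⟩ := hUSc.exists_isCompact_lt_add (tv_ne_top μ _) hδ0
  obtain ⟨B, hBsub, hBc, hBlt⟩ := hUS.exists_isCompact_lt_add (tv_ne_top μ _) hδ0
  have hAm : MeasurableSet A := hAc.isClosed.measurableSet
  have hBm : MeasurableSet B := hBc.isClosed.measurableSet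
  have hAU : A ⊆ U := hAsub.trans Set.inter_subset_left
  have hBU : B ⊆ U := hBsub.trans Set.inter_subset_left
  -- p (U ∩ S) = 0, n (U ∩ Sᶜ) = 0, n A = 0, p B = 0
  have hnA : n A = 0 := le_antisymm (hnS ▸ measure_mono (hAsub.trans Set.inter_subset_right)) (zero_le)
  have hpB : p B = 0 := le_antisymm (hpS ▸ measure_mono (hBsub.trans Set.inter_subset_right)) (zero_le)
  have hpUS : p (U ∩ S) = 0 :=
    le_antisymm (hpS ▸ measure_mono Set.inter_subset_right) (zero_le)
  have hnUSc : n (U ∩ Sᶜ) = 0 :=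
    le_antisymm (hnS ▸ measure_mono Set.inter_subset_right) (zero_le)
  -- p U < p A + δ
  have hpU : p U < p A + δ := by
    have h1 : p U ≤ p (U ∩ Sᶜ) := by
      have : p U ≤ p (U ∩ Sᶜ) + p (U ∩ S) := by
        refine le_trans (measure_mono ?_) (measure_union_le _ _)
        intro x hx
        by_cases hxS : x ∈ S
        · exact Or.inr ⟨hx, hxS⟩
        · exact Or.inl ⟨hx, hxS⟩
      simpa [hpUS] using this
    have h2 : p (U ∩ Sᶜ) ≤ μ.totalVariation (U ∩ Sᶜ) := by
      rw [tv_apply]; exact le_self_add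
    have h3 : μ.totalVariation A = p A := by rw [tv_apply, hnA, add_zero]
    calc p U ≤ μ.totalVariation (U ∩ Sᶜ) := h1.trans h2
      _ < μ.totalVariation A + δ := hAlt
      _ = p A + δ := by rw [h3]
  have hnU : n U < n B + δ := by
    have h1 : n U ≤ n (U ∩ S) := by
      have : n U ≤ n (U ∩ S) + n (U ∩ Sᶜ) := by
        refine le_trans (measure_mono ?_) (measure_union_le _ _)
        intro x hx
        by_cases hxS : x ∈ S
        · exact Or.inl ⟨hx, hxS⟩
        · exact Or.inr ⟨hx, hxS⟩
      simpa [hnUSc] using this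
    have h2 : n (U ∩ S) ≤ μ.totalVariation (U ∩ S) := by
      rw [tv_apply]; exact le_add_self
    have h3 : μ.totalVariation B = n B := by rw [tv_apply, hpB, zero_add]
    calc n U ≤ μ.totalVariation (U ∩ S) := h1.trans h2
      _ < μ.totalVariation B + δ := hBlt
      _ = n B + δ := by rw [h3]
  -- bound measure of differences
  have hpUA : p (U \ A) ≤ δ := by
    have heq : p (U \ A) + p A = p U := by
      rw [← measure_union (Set.disjoint_sdiff_left) hAm, Set.diff_union_of_subset hAU]
    have h' := heq ▸ hpU
    rw [add_comm (p A) δ] at h'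
    exact le_of_lt ((ENNReal.add_lt_add_iff_right (measure_ne_top _ _)).1 h')
  have hnUB : n (U \ B) ≤ δ := by
    have heq : n (U \ B) + n B = n U := by
      rw [← measure_union (Set.disjoint_sdiff_left) hBm, Set.diff_union_of_subset hBU]
    have h' := heq ▸ hnU
    rw [add_comm (n B) δ] at h'
    exact le_of_lt ((ENNReal.add_lt_add_iff_right (measure_ne_top _ _)).1 h')
  -- Urysohn functions
  have hAB : Disjoint A B :=
    Set.disjoint_of_subset (hAsub.trans Set.inter_subset_right)
      (hBsub.trans Set.inter_subset_right) disjoint_compl_left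
  have hdisjA : Disjoint (B ∪ Uᶜ) A := by
    rw [Set.disjoint_union_left]
    exact ⟨hAB.symm, Set.disjoint_compl_left_iff_subset.2 hAU⟩
  have hdisjB : Disjoint (A ∪ Uᶜ) B := by
    rw [Set.disjoint_union_left]
    exact ⟨hAB, Set.disjoint_compl_left_iff_subset.2 hBU⟩
  obtain ⟨f, hf0, hf1, hf01⟩ := exists_continuous_zero_one_of_isClosed
    (hBc.isClosed.union hU.isClosed_compl) hAc.isClosed hdisjA
  obtain ⟨h, hh0, hh1, hh01⟩ := exists_continuous_zero_one_of_isClosed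
    (hAc.isClosed.union hU.isClosed_compl) hBc.isClosed hdisjB
  set g : C(K, ℝ) := f - h with hg
  have hgx : ∀ x, g x = f x - h x := fun x => rfl
  have hgA : ∀ x ∈ A, g x = 1 := by
    intro x hx
    rw [hgx, hf1 hx, hh0 (Set.mem_union_left _ hx)]
    simp
  have hgB : ∀ x ∈ B, g x = -1 := by
    intro x hx
    rw [hgx, hf0 (Set.mem_union_left _ hx), hh1 hx]
    simp
  have hgU : ∀ x ∉ U, g x = 0 := by
    intro x hx
    rw [hgx, hf0 (Set.mem_union_right _ hx), hh0 (Set.mem_union_right _ hx)]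
    simp
  have hg1 : ∀ x, |g x| ≤ 1 := by
    intro x
    rw [hgx, abs_le]
    constructor
    · have := (hf01 x).1; have := (hh01 x).2; linarith
    · have := (hf01 x).2; have := (hh01 x).1; linarith
  -- lower bound for sInteg μ g
  have hUAm : MeasurableSet (U \ A) := hU.measurableSet.diff hAm
  have hUBm : MeasurableSet (U \ B) := hU.measurableSet.diff hBm
  have hgintp : Integrable (fun x => g x) p :=
    g.continuous.integrable_of_hasCompactSupport (HasCompactSupport.of_compactSpace _)
  have hgintn : Integrable (fun x => g x) n :=
    g.continuous.integrable_of_hasCompactSupport (HasCompactSupport.of_compactSpace _)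
  have hlow : (p A).toReal - (p (U \ A)).toReal ≤ ∫ x, g x ∂p := by
    have hφint : Integrable (fun x => A.indicator (fun _ => (1 : ℝ)) x
        - (U \ A).indicator (fun _ => (1 : ℝ)) x) p :=
      ((integrable_const (1 : ℝ)).indicator hAm).sub
        ((integrable_const (1 : ℝ)).indicator hUAm)
    have hmono : ∀ x, A.indicator (fun _ => (1 : ℝ)) x
        - (U \ A).indicator (fun _ => (1 : ℝ)) x ≤ g x := by
      intro x
      by_cases hxA : x ∈ A
      · have : x ∉ U \ A := fun hx => hx.2 hxA
        simp [hxA, this, hgA x hxA]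
      · by_cases hxU : x ∈ U
        · have hx : x ∈ U \ A := ⟨hxU, hxA⟩
          have := (abs_le.1 (hg1 x)).1
          simp only [Set.indicator_of_notMem hxA, Set.indicator_of_mem hx]
          linarith
        · have : x ∉ U \ A := fun hx => hxU hx.1
          simp [hxA, this, hgU x hxU]
    calc (p A).toReal - (p (U \ A)).toReal
        = ∫ x, (A.indicator (fun _ => (1 : ℝ)) x
            - (U \ A).indicator (fun _ => (1 : ℝ)) x) ∂p := by
          rw [integral_sub ((integrable_const (1 : ℝ)).indicator hAm)
            ((integrable_const (1 : ℝ)).indicator hUAm),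
            integral_indicator_const (1 : ℝ) hAm, integral_indicator_const (1 : ℝ) hUAm]
          simp; rfl
      _ ≤ ∫ x, g x ∂p := integral_mono hφint hgintp hmono
  have hupp : ∫ x, g x ∂n ≤ (n (U \ B)).toReal - (n B).toReal := by
    have hψint : Integrable (fun x => (U \ B).indicator (fun _ => (1 : ℝ)) x
        - B.indicator (fun _ => (1 : ℝ)) x) n :=
      ((integrable_const (1 : ℝ)).indicator hUBm).sub
        ((integrable_const (1 : ℝ)).indicator hBm)
    have hmono : ∀ x, g x ≤ (U \ B).indicator (fun _ => (1 : ℝ)) x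
        - B.indicator (fun _ => (1 : ℝ)) x := by
      intro x
      by_cases hxB : x ∈ B
      · have : x ∉ U \ B := fun hx => hx.2 hxB
        simp [hxB, this, hgB x hxB]
      · by_cases hxU : x ∈ U
        · have hx : x ∈ U \ B := ⟨hxU, hxB⟩
          have := (abs_le.1 (hg1 x)).2
          simp only [Set.indicator_of_notMem hxB, Set.indicator_of_mem hx]
          linarith
        · have : x ∉ U \ B := fun hx => hxU hx.1
          simp [hxB, this, hgU x hxU]
    calc ∫ x, g x ∂n ≤ ∫ x, ((U \ B).indicator (fun _ => (1 : ℝ)) x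
            - B.indicator (fun _ => (1 : ℝ)) x) ∂n := integral_mono hgintn hψint hmono
      _ = (n (U \ B)).toReal - (n B).toReal := by
          rw [integral_sub ((integrable_const (1 : ℝ)).indicator hUBm)
            ((integrable_const (1 : ℝ)).indicator hBm),
            integral_indicator_const (1 : ℝ) hUBm, integral_indicator_const (1 : ℝ) hBm]
          simp; rfl
  -- real estimate: (tv U).toReal ≤ sInteg μ g + ε
  have hpUr : (p U).toReal ≤ (p A).toReal + (p (U \ A)).toReal := by
    rw [← ENNReal.toReal_add (measure_ne_top _ _) (measure_ne_top _ _)]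
    refine ENNReal.toReal_mono (ENNReal.add_ne_top.2 ⟨measure_ne_top _ _, measure_ne_top _ _⟩) ?_
    calc p U = p (A ∪ (U \ A)) := by rw [Set.union_diff_cancel hAU]
      _ ≤ p A + p (U \ A) := measure_union_le _ _
  have hnUr : (n U).toReal ≤ (n B).toReal + (n (U \ B)).toReal := by
    rw [← ENNReal.toReal_add (measure_ne_top _ _) (measure_ne_top _ _)]
    refine ENNReal.toReal_mono (ENNReal.add_ne_top.2 ⟨measure_ne_top _ _, measure_ne_top _ _⟩) ?_
    calc n U = n (B ∪ (U \ B)) := by rw [Set.union_diff_cancel hBU]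
      _ ≤ n B + n (U \ B) := measure_union_le _ _
  have hpUAr : (p (U \ A)).toReal ≤ (ε : ℝ) / 4 := by
    rw [← hδr]; exact ENNReal.toReal_mono hδtop hpUA
  have hnUBr : (n (U \ B)).toReal ≤ (ε : ℝ) / 4 := by
    rw [← hδr]; exact ENNReal.toReal_mono hδtop hnUB
  have hreal : (μ.totalVariation U).toReal ≤ sInteg μ g + (ε : ℝ) := by
    have htv : (μ.totalVariation U).toReal = (p U).toReal + (n U).toReal := by
      rw [tv_apply, ENNReal.toReal_add (measure_ne_top _ _) (measure_ne_top _ _)]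
    rw [htv, sInteg]
    have := hlow
    have := hupp
    linarith
  -- pass to liminf
  have key : ∀ i, ENNReal.ofReal (sInteg (μs i) g) ≤ (μs i).totalVariation U :=
    fun i => ENNReal.ofReal_le_of_le_toReal
      (sInteg_le_tv (μs i) g hU.measurableSet hg1 hgU)
  have hlim : ENNReal.ofReal (sInteg μ g) ≤ liminf (fun i => (μs i).totalVariation U) l := by
    have ht : Tendsto (fun i => ENNReal.ofReal (sInteg (μs i) g)) l
        (nhds (ENNReal.ofReal (sInteg μ g))) :=
      (ENNReal.continuous_ofReal.tendsto _).comp (hconv g)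
    calc ENNReal.ofReal (sInteg μ g)
        = liminf (fun i => ENNReal.ofReal (sInteg (μs i) g)) l := ht.liminf_eq.symm
      _ ≤ liminf (fun i => (μs i).totalVariation U) l :=
          liminf_le_liminf (Eventually.of_forall key)
  calc μ.totalVariation U = ENNReal.ofReal ((μ.totalVariation U).toReal) :=
        (ENNReal.ofReal_toReal (tv_ne_top μ U)).symm
    _ ≤ ENNReal.ofReal (sInteg μ g + (ε : ℝ)) := ENNReal.ofReal_le_ofReal hreal
    _ ≤ ENNReal.ofReal (sInteg μ g) + ENNReal.ofReal (ε : ℝ) := ENNReal.ofReal_add_le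
    _ ≤ liminf (fun i => (μs i).totalVariation U) l + ε := by
        rw [ENNReal.ofReal_coe_nnreal]
        exact add_le_add hlim le_rfl
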